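/- Let M be a nonempty metrizable topological space and let F : M × [0,1] → M be a continuous map satisfying F(x,0) = F(x,1) = x for all x ∈ M. Then the restriction of F to M × (0,1) is not a topological embedding. -/

import Mathlib

open Set Topology unitInterval

/-- The Hilbert cube `Q = [0,1]^ℕ`. -/
abbrev HilbertCube : Type := ℕ → unitInterval

/-- Two maps `f g : X → Y` are `𝒰`-close if every `x` admits `U ∈ 𝒰` containing
both `f x` and `g x`. -/
def UClose {X Y : Type} (𝒰 : Set (Set Y)) (f g : X → Y) : Prop :=
  ∀ x : X, ∃ U ∈ 𝒰, f x ∈ U ∧ g x ∈ U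

/-- `𝒰` is a cover of `Y` by open sets. -/
def IsOpenCover {Y : Type} [TopologicalSpace Y] (𝒰 : Set (Set Y)) : Prop :=
  (∀ U ∈ 𝒰, IsOpen U) ∧ ⋃₀ 𝒰 = Set.univ

/-- A closed set `Z ⊆ Y` is a `Z`-set: every map of the Hilbert cube into `Y` can be
approximated, with respect to any open cover, by maps omitting `Z`. -/
def IsZSet {Y : Type} [TopologicalSpace Y] (Z : Set Y) : Prop :=
  IsClosed Z ∧ ∀ u : HilbertCube → Y, Continuous u → ∀ 𝒰 : Set (Set Y), IsOpenCover 𝒰 →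
    ∃ v : HilbertCube → Y, Continuous v ∧ Set.range v ⊆ Zᶜ ∧ UClose 𝒰 u v

/-- A `σ`-`Z`-set is a countable union of `Z`-sets. -/
def IsSigmaZSet {Y : Type} [TopologicalSpace Y] (B : Set Y) : Prop :=
  ∃ Z : ℕ → Set Y, (∀ n, IsZSet (Z n)) ∧ B = ⋃ n, Z n

/-- A space is completely metrizable if some complete metric induces its topology. -/
def IsCompletelyMetrizable (X : Type) [t : TopologicalSpace X] : Prop :=
  ∃ m : MetricSpace X, m.toUniformSpace.toTopologicalSpace = t ∧
    @CompleteSpace X m.toUniformSpace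

/-- `X` has a basis of open sets of cardinality at most `α`. -/
def HasWeightLE (X : Type) [TopologicalSpace X] (α : Cardinal) : Prop :=
  ∃ b : Set (Set X), TopologicalSpace.IsTopologicalBasis b ∧ Cardinal.mk b ≤ α

/-- An `α`-manifold: a metrizable space admitting an open cover by sets homeomorphic to the
real Hilbert space `ℓ²(ι)` with an orthonormal basis indexed by a set `ι` of cardinality `α`. -/
def IsAlphaManifold (α : Cardinal) (M : Type) [TopologicalSpace M] : Prop :=
  TopologicalSpace.MetrizableSpace M ∧
  ∃ ι : Type, Cardinal.mk ι = α ∧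
    ∃ 𝒞 : Set (Set M), (∀ U ∈ 𝒞, IsOpen U ∧ Nonempty (↥U ≃ₜ lp (fun _ : ι => ℝ) 2)) ∧
      ⋃₀ 𝒞 = Set.univ

/-- A Hilbert manifold: a metrizable space admitting an open cover by sets homeomorphic
to some infinite-dimensional real Hilbert space. -/
def IsHilbertManifold (M : Type) [TopologicalSpace M] : Prop :=
  TopologicalSpace.MetrizableSpace M ∧
  ∃ 𝒞 : Set (Set M), (∀ U ∈ 𝒞, IsOpen U ∧
      ∃ ι : Type, Infinite ι ∧ Nonempty (↥U ≃ₜ lp (fun _ : ι => ℝ) 2)) ∧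
    ⋃₀ 𝒞 = Set.univ

/-- `f : X → Y` is a `Z`-embedding into the subspace `M ⊆ Y`: it corestricts to a closed
embedding of `X` into `M` whose image is a `Z`-set in `M`. -/
def IsZEmbeddingInto {X Y : Type} [TopologicalSpace X] [TopologicalSpace Y]
    (M : Set Y) (f : X → Y) : Prop :=
  ∃ g : X → ↥M, (∀ x, (g x : Y) = f x) ∧ Topology.IsClosedEmbedding g ∧
    IsZSet (Set.range g)

/-- A `𝒰`-homotopy: a continuous `F : X × I → Y` such that each track `F({x} × I)` is a
single point or lies in some member of `𝒰`. -/
def IsUHomotopy {X Y : Type} [TopologicalSpace X] [TopologicalSpace Y]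
    (𝒰 : Set (Set Y)) (F : X × unitInterval → Y) : Prop :=
  Continuous F ∧ ∀ x : X, (∀ s t : unitInterval, F (x, s) = F (x, t)) ∨
    ∃ U ∈ 𝒰, ∀ t : unitInterval, F (x, t) ∈ U

/-- `f` and `g` are `𝒰`-homotopic relative to `A`. -/
def UHomotopicRel {X Y : Type} [TopologicalSpace X] [TopologicalSpace Y]
    (𝒰 : Set (Set Y)) (A : Set X) (f g : X → Y) : Prop :=
  ∃ F : X × unitInterval → Y, IsUHomotopy 𝒰 F ∧
    (∀ x, F (x, 0) = f x) ∧ (∀ x, F (x, 1) = g x) ∧ ∀ a ∈ A, ∀ t, F (a, t) = f a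

/-- **Example (false).** For a homotopy `F` with `F(·,0) = F(·,1) = id` on a nonempty
metrizable space, the restriction of `F` to `M × (0,1)` is never an embedding. -/
theorem no_embedding_of_identity_endpoints
    (M : Type) [TopologicalSpace M] [TopologicalSpace.MetrizableSpace M] [Nonempty M]
    (F : M × unitInterval → M) (hF : Continuous F)
    (h0 : ∀ x, F (x, 0) = x) (h1 : ∀ x, F (x, 1) = x) :
    ¬ Topology.IsEmbedding
      (fun q : ↥{p : M × unitInterval | 0 < (p.2 : ℝ) ∧ (p.2 : ℝ) < 1} => F q.1) := by
  intro he
  obtain ⟨x⟩ := ‹Nonempty M›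
  set S : Set (M × unitInterval) := {p | 0 < (p.2 : ℝ) ∧ (p.2 : ℝ) < 1} with hS
  have half : unitInterval := ⟨1/2, by constructor <;> norm_num⟩
  set h2 : unitInterval := ⟨1/2, by constructor <;> norm_num⟩ with hh2
  set y : M := F (x, h2) with hy
  have hun : ∀ n : ℕ, (1 : ℝ)/(n+2) ∈ Set.Icc (0:ℝ) 1 := by
    intro n
    constructor
    · positivity
    · rw [div_le_one (by positivity)]
      have : (0:ℝ) ≤ (n:ℝ) := Nat.cast_nonneg n
      linarith
  set u : ℕ → unitInterval := fun n => ⟨1/(n+2), hun n⟩ with hu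
  set q : ℕ → S := fun n => ⟨(y, u n), by
    constructor
    · show (0:ℝ) < 1/(n+2); positivity
    · show (1:ℝ)/(n+2) < 1
      rw [div_lt_one (by positivity)]
      have : (0:ℝ) ≤ (n:ℝ) := Nat.cast_nonneg n
      linarith⟩ with hq
  set p : S := ⟨(x, h2), by constructor <;> · show _; norm_num⟩ with hp
  -- the real sequence 1/(n+2) tends to 0
  have hto0 : Filter.Tendsto (fun n : ℕ => (1:ℝ)/(n+2)) Filter.atTop (nhds 0) := by
    have hdiv : Filter.Tendsto (fun n : ℕ => ((n:ℝ)+2)) Filter.atTop Filter.atTop :=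
      Filter.tendsto_atTop_add_const_right Filter.atTop (2:ℝ) tendsto_natCast_atTop_atTop
    simpa [one_div, Function.comp_def] using tendsto_inv_atTop_zero.comp hdiv
  -- u n → 0 in unitInterval
  have huto : Filter.Tendsto u Filter.atTop (nhds (0 : unitInterval)) := by
    rw [tendsto_subtype_rng]
    exact hto0
  -- images converge: F (y, u n) → F (y, 0) = y
  have himg : Filter.Tendsto (fun n => F (y, u n)) Filter.atTop (nhds (F (x, h2))) := by
    have : Filter.Tendsto (fun n => (y, u n)) Filter.atTop (nhds (y, (0 : unitInterval))) :=
      Filter.Tendsto.prodMk_nhds tendsto_const_nhds huto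
    have := (hF.tendsto (y, (0 : unitInterval))).comp this
    rw [h0 y] at this
    rw [hy]
    exact this
  -- by the embedding, q n → p in S
  have hqp : Filter.Tendsto q Filter.atTop (nhds p) := by
    rw [he.toIsInducing.tendsto_nhds_iff]
    exact himg
  -- project to the real second coordinate
  have hproj : Continuous (fun r : S => ((r : M × unitInterval).2 : ℝ)) :=
    continuous_subtype_val.comp (continuous_snd.comp continuous_subtype_val)
  have h12 : Filter.Tendsto (fun n : ℕ => (1:ℝ)/(n+2)) Filter.atTop (nhds (1/2)) := by
    have := (hproj.tendsto p).comp hqp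
    exact this
  have := tendsto_nhds_unique hto0 h12
  norm_num at this
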